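/- Define p_n by p_1 = (1−p)/2 and, for n ≥ 2, p_n = (p+1/2) Σ_{k1+k2=n−1} p_{k1} p_{k2} − (p/2) Σ_{k1+k2+k3+k4=n−1} p_{k1} p_{k2} p_{k3} p_{k4} (indices positive). Then for every n, the derivative of p_n with respect to p, evaluated at p = 1/4, equals −(4/3)·p_n(1/4). -/

import Mathlib

open Finset in
/-- Compositions of `n-1` into 2 positive parts. -/
def comp2 (n : ℕ) : Finset (ℕ × ℕ) :=
  ((range n) ×ˢ (range n)).filter fun q => 1 ≤ q.1 ∧ 1 ≤ q.2 ∧ q.1 + q.2 = n - 1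

open Finset in
/-- Compositions of `n-1` into 3 positive parts. -/
def comp3 (n : ℕ) : Finset (ℕ × ℕ × ℕ) :=
  ((range n) ×ˢ (range n) ×ˢ (range n)).filter fun q =>
    1 ≤ q.1 ∧ 1 ≤ q.2.1 ∧ 1 ≤ q.2.2 ∧ q.1 + q.2.1 + q.2.2 = n - 1

open Finset in
/-- Compositions of `n-1` into 4 positive parts. -/
def comp4 (n : ℕ) : Finset (ℕ × ℕ × ℕ × ℕ) :=
  ((range n) ×ˢ (range n) ×ˢ (range n) ×ˢ (range n)).filter fun q =>
    1 ≤ q.1 ∧ 1 ≤ q.2.1 ∧ 1 ≤ q.2.2.1 ∧ 1 ≤ q.2.2.2 ∧ q.1 + q.2.1 + q.2.2.1 + q.2.2.2 = n - 1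

theorem stmt_11 (P : ℕ → ℝ → ℝ)
    (hP1 : ∀ x : ℝ, P 1 x = (1 - x) / 2)
    (hPrec : ∀ n, 2 ≤ n → ∀ x : ℝ,
      P n x = (x + 1/2) * ∑ q ∈ comp2 n, P q.1 x * P q.2 x
              - x/2 * ∑ q ∈ comp4 n, P q.1 x * P q.2.1 x * P q.2.2.1 x * P q.2.2.2 x)
    :
    ∀ n, 1 ≤ n → deriv (P n) (1/4) = -(4/3) * P n (1/4) := by
  suffices h : ∀ n, 1 ≤ n →
      HasDerivAt (P n) (-(4/3) * P n (1/4)) (1/4 : ℝ) by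
    intro n hn
    exact (h n hn).deriv
  intro n
  induction n using Nat.strong_induction_on with
  | _ n ih =>
    intro hn
    rcases eq_or_lt_of_le hn with h1 | h2
    · -- n = 1
      have hfun : P 1 = fun x : ℝ => (1 - x) / 2 := funext hP1
      rw [← h1, hfun]
      have : HasDerivAt (fun x : ℝ => (1 - x) / 2) ((0 - 1) / 2) (1/4 : ℝ) :=
        ((hasDerivAt_const _ (1:ℝ)).sub (hasDerivAt_id _)).div_const 2
      convert this using 1
      norm_num
    · -- 2 ≤ n
      have h2' : 2 ≤ n := h2
      have key : ∀ k, 1 ≤ k → k < n →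
          HasDerivAt (P k) (-(4/3) * P k (1/4)) (1/4 : ℝ) := fun k hk1 hk2 => ih k hk2 hk1
      have hS2 : HasDerivAt (fun x : ℝ => ∑ q ∈ comp2 n, P q.1 x * P q.2 x)
          (∑ q ∈ comp2 n,
            ((-(4/3) * P q.1 (1/4)) * P q.2 (1/4) + P q.1 (1/4) * (-(4/3) * P q.2 (1/4))))
          (1/4 : ℝ) := by
        apply HasDerivAt.fun_sum
        intro q hq
        simp only [comp2, Finset.mem_filter, Finset.mem_product, Finset.mem_range] at hq
        exact (key q.1 hq.2.1 hq.1.1).mul (key q.2 hq.2.2.1 hq.1.2)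
      have hS4 : HasDerivAt
          (fun x : ℝ => ∑ q ∈ comp4 n, P q.1 x * P q.2.1 x * P q.2.2.1 x * P q.2.2.2 x)
          (∑ q ∈ comp4 n,
            ((((-(4/3) * P q.1 (1/4)) * P q.2.1 (1/4)
               + P q.1 (1/4) * (-(4/3) * P q.2.1 (1/4))) * P q.2.2.1 (1/4)
              + P q.1 (1/4) * P q.2.1 (1/4) * (-(4/3) * P q.2.2.1 (1/4))) * P q.2.2.2 (1/4)
             + P q.1 (1/4) * P q.2.1 (1/4) * P q.2.2.1 (1/4) * (-(4/3) * P q.2.2.2 (1/4))))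
          (1/4 : ℝ) := by
        apply HasDerivAt.fun_sum
        intro q hq
        simp only [comp4, Finset.mem_filter, Finset.mem_product, Finset.mem_range] at hq
        exact (((key q.1 hq.2.1 hq.1.1).mul (key q.2.1 hq.2.2.1 hq.1.2.1)).mul
            (key q.2.2.1 hq.2.2.2.1 hq.1.2.2.1)).mul (key q.2.2.2 hq.2.2.2.2.1 hq.1.2.2.2)
      have hx : HasDerivAt (fun x : ℝ => x + 1/2) 1 (1/4 : ℝ) :=
        (hasDerivAt_id _).add_const _
      have hh : HasDerivAt (fun x : ℝ => x / 2) (1/2) (1/4 : ℝ) := by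
        have := (hasDerivAt_id (1/4 : ℝ)).div_const 2
        simpa using this
      have hF := (hx.mul hS2).sub (hh.mul hS4)
      have hfun : P n = fun x : ℝ =>
          (x + 1/2) * ∑ q ∈ comp2 n, P q.1 x * P q.2 x
          - x/2 * ∑ q ∈ comp4 n, P q.1 x * P q.2.1 x * P q.2.2.1 x * P q.2.2.2 x :=
        funext (hPrec n h2')
      rw [hfun]
      refine hF.congr_deriv ?_
      -- value side
      set s2 := ∑ q ∈ comp2 n, P q.1 (1/4 : ℝ) * P q.2 (1/4 : ℝ) with hs2
      set s4 := ∑ q ∈ comp4 n,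
          P q.1 (1/4 : ℝ) * P q.2.1 (1/4 : ℝ) * P q.2.2.1 (1/4 : ℝ) * P q.2.2.2 (1/4 : ℝ)
          with hs4
      have e2 : (∑ q ∈ comp2 n,
          ((-(4/3) * P q.1 (1/4 : ℝ)) * P q.2 (1/4 : ℝ)
            + P q.1 (1/4 : ℝ) * (-(4/3) * P q.2 (1/4 : ℝ)))) = -(8/3) * s2 := by
        rw [hs2, Finset.mul_sum]
        exact Finset.sum_congr rfl fun q _ => by ring
      have e4 : (∑ q ∈ comp4 n,
          ((((-(4/3) * P q.1 (1/4 : ℝ)) * P q.2.1 (1/4 : ℝ)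
             + P q.1 (1/4 : ℝ) * (-(4/3) * P q.2.1 (1/4 : ℝ))) * P q.2.2.1 (1/4 : ℝ)
            + P q.1 (1/4 : ℝ) * P q.2.1 (1/4 : ℝ) * (-(4/3) * P q.2.2.1 (1/4 : ℝ)))
              * P q.2.2.2 (1/4 : ℝ)
           + P q.1 (1/4 : ℝ) * P q.2.1 (1/4 : ℝ) * P q.2.2.1 (1/4 : ℝ)
              * (-(4/3) * P q.2.2.2 (1/4 : ℝ)))) = -(16/3) * s4 := by
        rw [hs4, Finset.mul_sum]
        exact Finset.sum_congr rfl fun q _ => by ring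
      rw [e2, e4]
      ring
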